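/- In a rooted tree where the root and all internal vertices at even distance from the root have exactly r ≥ 3 children, vertices at odd distance have exactly d−1 ≥ 2 children, every 'hyperedge-vertex' (a vertex at even distance from the root) has exactly r(d−1) hyperedge-vertices at distance 2, of which at most d−1 are at distance ≤ its own distance from the root; hence if each hyperedge-vertex is 2-colored so that at least d of its distance-2 hyperedge-vertices have the opposite color, then every hyperedge-vertex at even depth 4ℓ with the root's color has a hyperedge-vertex at depth 4(ℓ+1) with the root's color, provided the tree is complete up to depth 4(ℓ+1). -/

import Mathlib

/-- Valid nodes of the infinite rooted tree in which vertices at even distance from the root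
have `r` children and vertices at odd distance have `d - 1` children; a node is encoded by the
list of child indices on the path from the root. -/
def treeValid (r d : ℕ) (p : List ℕ) : Prop :=
  ∀ i (h : i < p.length), p.get ⟨i, h⟩ < if i % 2 = 0 then r else d - 1

/-- The (undirected) tree on the valid nodes, with parent/child adjacency. -/
def treeGraph (r d : ℕ) : SimpleGraph (List ℕ) where
  Adj p q := (treeValid r d p ∧ treeValid r d q) ∧
    ((∃ a, q = p ++ [a]) ∨ (∃ a, p = q ++ [a]))
  symm := by
    constructor
    intro p q h
    exact ⟨⟨h.1.2, h.1.1⟩, h.2.symm⟩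
  loopless := by
    constructor
    intro p h
    rcases h.2 with ⟨a, ha⟩ | ⟨a, ha⟩ <;>
      · have := congrArg List.length ha
        simp at this

/-- Structure of distance-2 pairs in the tree. -/
lemma dist_two_cases (r d : ℕ) (p q : List ℕ)
    (hdist : (treeGraph r d).dist p q = 2) (hne : q ≠ p) :
    (∃ a b, q = p ++ [a, b]) ∨
    (∃ m a, p = m ++ [a] ∧ ((∃ b, b ≠ a ∧ q = m ++ [b]) ∨ q = m.dropLast)) := by
  have hreach : (treeGraph r d).Reachable p q := by
    by_contra h
    have := SimpleGraph.dist_eq_zero_of_not_reachable h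
    omega
  obtain ⟨w, hw⟩ := hreach.exists_walk_length_eq_dist
  rw [hdist] at hw
  cases w with
  | nil => simp at hw
  | cons h₁ w₁ =>
    cases w₁ with
    | nil => simp at hw
    | cons h₂ w₂ =>
      cases w₂ with
      | cons h₃ w₃ => simp [SimpleGraph.Walk.length_cons] at hw
      | nil =>
        rcases h₁.2 with ⟨a, ha⟩ | ⟨a, ha⟩
        · rcases h₂.2 with ⟨b, hb⟩ | ⟨b, hb⟩
          · left; exact ⟨a, b, by rw [hb, ha]; simp⟩
          · rw [ha] at hb
            have := (List.append_inj' hb (by simp)).1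
            exact absurd this.symm hne
        · rcases h₂.2 with ⟨b, hb⟩ | ⟨b, hb⟩
          · right
            refine ⟨_, a, ha, Or.inl ⟨b, ?_, hb⟩⟩
            intro h; apply hne; rw [hb, h, ← ha]
          · right
            exact ⟨_, a, ha, Or.inr (by rw [hb, List.dropLast_concat])⟩


lemma concat_last_lt (r d : ℕ) (m : List ℕ) (b : ℕ) (h : treeValid r d (m ++ [b]))
    (hodd : m.length % 2 = 1) : b < d - 1 := by
  have h1 : m.length < (m ++ [b]).length := by simp
  have := h m.length h1
  rw [hodd] at this
  simpa using this

/-- Key step: every valid even-depth vertex (within the completeness range) has a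
grandchild of the opposite color. -/
lemma exists_grandchild (r d : ℕ) (hd : 3 ≤ d) (col : List ℕ → Bool) (N : ℕ)
    (hopp : ∀ p : List ℕ, treeValid r d p → Even p.length → p.length + 2 ≤ N →
      d ≤ Set.ncard {q : List ℕ | treeValid r d q ∧ Even q.length ∧
        (treeGraph r d).dist p q = 2 ∧ col q ≠ col p})
    (p : List ℕ) (hp : treeValid r d p) (hev : Even p.length) (hN : p.length + 2 ≤ N) :
    ∃ a b, treeValid r d (p ++ [a, b]) ∧ col (p ++ [a, b]) ≠ col p := by
  by_contra hno
  push_neg at hno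
  have hcard := hopp p hp hev hN
  set S := {q : List ℕ | treeValid r d q ∧ Even q.length ∧
      (treeGraph r d).dist p q = 2 ∧ col q ≠ col p} with hS
  have hnogc : ∀ q ∈ S, ¬ ∃ a b, q = p ++ [a, b] := by
    rintro q hq ⟨a, b, rfl⟩
    exact hq.2.2.2 (hno a b hq.1)
  rcases List.eq_nil_or_concat p with rfl | ⟨m, a, hma⟩
  · have hne : S.Nonempty := Set.nonempty_of_ncard_ne_zero (by omega)
    obtain ⟨q, hq⟩ := hne
    have hqne : q ≠ [] := by intro h; subst h; exact hq.2.2.2 rfl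
    rcases dist_two_cases r d [] q hq.2.2.1 hqne with hgc | ⟨m, a, hm, _⟩
    · exact hnogc q hq hgc
    · exact absurd (congrArg List.length hm) (by simp)
  · rw [List.concat_eq_append] at hma
    subst hma
    have hodd : m.length % 2 = 1 := by
      rcases hev with ⟨k, hk⟩
      simp at hk
      omega
    have ha : a < d - 1 := concat_last_lt r d m a hp hodd
    have hsub : S ⊆ ↑(insert m.dropLast
        (((Finset.Iio (d-1)).erase a).image (fun b => m ++ [b]))) := by
      intro q hq
      have hqne : q ≠ m ++ [a] := by
        intro h; exact hq.2.2.2 (by rw [h])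
      rcases dist_two_cases r d _ q hq.2.2.1 hqne with hgc | ⟨m', a', hm', hrest⟩
      · exact absurd hgc (hnogc q hq)
      · obtain ⟨hm'', ha''⟩ := List.append_inj' hm'.symm (by simp)
        have haa : a' = a := by simpa using ha''
        subst hm''; subst haa
        rcases hrest with ⟨b, hba, rfl⟩ | rfl
        · have hb : b < d - 1 := concat_last_lt r d _ b hq.1 hodd
          simp only [Finset.coe_insert, Set.mem_insert_iff, Finset.coe_image,
            Set.mem_image]
          right
          exact ⟨b, by simp [Finset.mem_erase, hba, hb], rfl⟩
        · simp
    have hle := Set.ncard_le_ncard hsub (Finset.finite_toSet _)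
    rw [Set.ncard_coe_finset] at hle
    have h1 := Finset.card_insert_le m.dropLast
      (((Finset.Iio (d-1)).erase a).image (fun b => m ++ [b]))
    have h2 := Finset.card_image_le (s := (Finset.Iio (d-1)).erase a)
      (f := fun b => m ++ [b])
    have h3 : ((Finset.Iio (d-1)).erase a).card = d - 1 - 1 := by
      rw [Finset.card_erase_of_mem (by simpa using ha), Nat.card_Iio]
    omega

/-- In the `(r, d)`-biregular incidence tree (hyperedge-vertices at even depth),
if every hyperedge-vertex (up to the completeness depth `N`) has at least `d` opposite-colored
hyperedge-vertices at distance 2, then every hyperedge-vertex at depth `4ℓ` carrying the root's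
color has a hyperedge-vertex at depth `4(ℓ+1)` (below it) with the root's color, provided the
tree is complete up to depth `4(ℓ+1)`. -/
theorem tree_color_propagation (r d : ℕ) (hr : 3 ≤ r) (hd : 3 ≤ d)
    (col : List ℕ → Bool) (N : ℕ)
    (hopp : ∀ p : List ℕ, treeValid r d p → Even p.length → p.length + 2 ≤ N →
      d ≤ Set.ncard {q : List ℕ | treeValid r d q ∧ Even q.length ∧
        (treeGraph r d).dist p q = 2 ∧ col q ≠ col p}) :
    ∀ ℓ : ℕ, ∀ p : List ℕ, treeValid r d p → p.length = 4 * ℓ → col p = col [] →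
      4 * (ℓ + 1) ≤ N →
      ∃ q : List ℕ, treeValid r d q ∧ q.length = 4 * (ℓ + 1) ∧ p <+: q ∧ col q = col [] := by
  intro ℓ p hp hlen hcol hN
  obtain ⟨a, b, h1v, h1c⟩ := exists_grandchild r d hd col N hopp p hp
    ⟨2 * ℓ, by omega⟩ (by omega)
  obtain ⟨c, e, h2v, h2c⟩ := exists_grandchild r d hd col N hopp (p ++ [a, b]) h1v
    (by simp; exact ⟨2 * ℓ + 1, by omega⟩) (by simp; omega)
  refine ⟨p ++ [a, b] ++ [c, e], h2v, by simp; omega, ⟨[a, b, c, e], by simp⟩, ?_⟩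
  rw [← hcol]
  revert h1c h2c
  cases hx : col p <;> cases hy : col (p ++ [a, b]) <;>
    cases hz : col (p ++ [a, b] ++ [c, e]) <;> simp_all
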